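/- Let β ∈ ℝ^{m×m}, and let P₁ ∈ ℝ^{m′×m}, P₂ ∈ ℝ^{n′×m}, Q₁ ∈ ℝ^{m×m′}, Q₂ ∈ ℝ^{m×n′} satisfy P₁Q₁ = Id_{m′}, Q₁P₁ + Q₂P₂ = Id_m, P₁ β^k Q₂ = 0 for all k ≥ 0, and ψᵀ Q₂ = 0 for a given ψ ∈ ℝ^m. Define ψ′ = Q₁ᵀψ and β′ = P₁βQ₁. If ξ′ ∈ ℝ^{m′} satisfies ψ′ᵀ exp(β′τ) ξ′ = 0 for all τ ≥ 0, and moreover ker{ψᵀ exp(βτ) : τ ≥ 0} ⊆ ker P₁ and ker{ψᵀ exp(βτ) : τ ≥ 0} ⊆ ker ψᵀ, then ξ′ = 0. -/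

import Mathlib

open Matrix

/-- Powers of the compressed matrix. -/
lemma stmt10_pow {m m' n' : ℕ} (A : Matrix (Fin m) (Fin m) ℝ)
    (P₁ : Matrix (Fin m') (Fin m) ℝ) (P₂ : Matrix (Fin n') (Fin m) ℝ)
    (Q₁ : Matrix (Fin m) (Fin m') ℝ) (Q₂ : Matrix (Fin m) (Fin n') ℝ)
    (hPQ1 : P₁ * Q₁ = 1)
    (hQP : Q₁ * P₁ + Q₂ * P₂ = 1)
    (hP1Q2 : ∀ k : ℕ, P₁ * A ^ k * Q₂ = 0) :
    ∀ k : ℕ, (P₁ * A * Q₁) ^ k = P₁ * A ^ k * Q₁ := by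
  intro k
  induction k with
  | zero => simp [hPQ1]
  | succ k ih =>
    have hQ1P1 : Q₁ * P₁ = 1 - Q₂ * P₂ := eq_sub_of_add_eq hQP
    rw [pow_succ, ih]
    have h1 : P₁ * A ^ k * Q₁ * (P₁ * A * Q₁) = P₁ * A ^ k * (Q₁ * P₁) * (A * Q₁) := by
      simp only [Matrix.mul_assoc]
    rw [h1, hQ1P1]
    have h5 : P₁ * A ^ k * (1 - Q₂ * P₂) * (A * Q₁) =
        P₁ * A ^ k * (A * Q₁) - P₁ * A ^ k * Q₂ * (P₂ * (A * Q₁)) := by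
      rw [Matrix.mul_sub, Matrix.mul_one, Matrix.sub_mul]
      simp only [Matrix.mul_assoc]
    rw [h5, hP1Q2 k, Matrix.zero_mul, sub_zero, pow_succ]
    simp only [Matrix.mul_assoc]

/-- `exp` of the compressed matrix. -/
lemma stmt10_exp {m m' : ℕ} (A : Matrix (Fin m) (Fin m) ℝ)
    (P₁ : Matrix (Fin m') (Fin m) ℝ) (Q₁ : Matrix (Fin m) (Fin m') ℝ)
    (hpow : ∀ k : ℕ, (P₁ * A * Q₁) ^ k = P₁ * A ^ k * Q₁) :
    NormedSpace.exp (P₁ * A * Q₁) = P₁ * NormedSpace.exp A * Q₁ := by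
  letI : SeminormedRing (Matrix (Fin m) (Fin m) ℝ) := Matrix.linftyOpSemiNormedRing
  letI : NormedRing (Matrix (Fin m) (Fin m) ℝ) := Matrix.linftyOpNormedRing
  letI : NormedAlgebra ℝ (Matrix (Fin m) (Fin m) ℝ) := Matrix.linftyOpNormedAlgebra
  have hsum : HasSum (fun n : ℕ => ((n.factorial : ℝ))⁻¹ • A ^ n) (NormedSpace.exp A) :=
    NormedSpace.exp_series_hasSum_exp' A
  let L : Matrix (Fin m) (Fin m) ℝ →ₗ[ℝ] Matrix (Fin m') (Fin m') ℝ :=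
    { toFun := fun X => P₁ * X * Q₁
      map_add' := fun X Y => by
        show P₁ * (X + Y) * Q₁ = P₁ * X * Q₁ + P₁ * Y * Q₁
        rw [Matrix.mul_add, Matrix.add_mul]
      map_smul' := fun c X => by
        simp [Matrix.mul_smul, Matrix.smul_mul] }
  have hL : Continuous L := LinearMap.continuous_of_finiteDimensional L
  have h2 : HasSum (fun n : ℕ => L (((n.factorial : ℝ))⁻¹ • A ^ n))
      (L (NormedSpace.exp A)) := hsum.mapL ⟨L, hL⟩
  have h3 : (fun n : ℕ => L (((n.factorial : ℝ))⁻¹ • A ^ n)) =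
      fun n : ℕ => ((n.factorial : ℝ))⁻¹ • (P₁ * A * Q₁) ^ n := by
    funext n
    show P₁ * (((n.factorial : ℝ))⁻¹ • A ^ n) * Q₁ = _
    rw [Matrix.mul_smul, Matrix.smul_mul, hpow n]
  rw [h3] at h2
  rw [NormedSpace.exp_eq_tsum ℝ]
  show (∑' n : ℕ, ((n.factorial : ℝ))⁻¹ • (P₁ * A * Q₁) ^ n) = P₁ * NormedSpace.exp A * Q₁
  rw [h2.tsum_eq]
  rfl

/-- The reduced model `(β′, ψ′) = (P₁βQ₁, Q₁ᵀψ)` has zero term structure kernel. -/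
theorem stmt_10 {m m' n' : ℕ} (β : Matrix (Fin m) (Fin m) ℝ) (ψ : Fin m → ℝ)
    (P₁ : Matrix (Fin m') (Fin m) ℝ) (P₂ : Matrix (Fin n') (Fin m) ℝ)
    (Q₁ : Matrix (Fin m) (Fin m') ℝ) (Q₂ : Matrix (Fin m) (Fin n') ℝ)
    (hPQ1 : P₁ * Q₁ = 1)
    (hQP : Q₁ * P₁ + Q₂ * P₂ = 1)
    (hP1Q2 : ∀ k : ℕ, P₁ * β ^ k * Q₂ = 0)
    (hψQ2 : Matrix.vecMul ψ Q₂ = 0)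
    (ψ' : Fin m' → ℝ) (hψ' : ψ' = Q₁ᵀ.mulVec ψ)
    (β' : Matrix (Fin m') (Fin m') ℝ) (hβ' : β' = P₁ * β * Q₁)
    (hkerP1 : ∀ u : Fin m → ℝ,
      (∀ τ ≥ (0 : ℝ), ψ ⬝ᵥ (NormedSpace.exp (τ • β)).mulVec u = 0) → P₁.mulVec u = 0)
    (hkerψ : ∀ u : Fin m → ℝ,
      (∀ τ ≥ (0 : ℝ), ψ ⬝ᵥ (NormedSpace.exp (τ • β)).mulVec u = 0) → ψ ⬝ᵥ u = 0)
    (ξ' : Fin m' → ℝ)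
    (hξ' : ∀ τ ≥ (0 : ℝ), ψ' ⬝ᵥ (NormedSpace.exp (τ • β')).mulVec ξ' = 0) :
    ξ' = 0 := by
  -- ψᵀ Q₁ P₁ = ψᵀ
  have hψQ1P1 : Matrix.vecMul ψ (Q₁ * P₁) = ψ := by
    have h6 : Matrix.vecMul ψ (Q₁ * P₁) + Matrix.vecMul (Matrix.vecMul ψ Q₂) P₂ = ψ := by
      rw [Matrix.vecMul_vecMul, ← Matrix.vecMul_add, hQP, Matrix.vecMul_one]
    rwa [hψQ2, Matrix.zero_vecMul, add_zero] at h6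
  set u : Fin m → ℝ := Q₁.mulVec ξ' with hu
  have key : ∀ τ ≥ (0 : ℝ), ψ ⬝ᵥ (NormedSpace.exp (τ • β)).mulVec u = 0 := by
    intro τ hτ
    -- exp (τ • β') = P₁ * exp (τ • β) * Q₁
    have hpow : ∀ k : ℕ, (P₁ * (τ • β) * Q₁) ^ k = P₁ * (τ • β) ^ k * Q₁ := by
      refine stmt10_pow (τ • β) P₁ P₂ Q₁ Q₂ hPQ1 hQP ?_
      intro k
      rw [smul_pow, Matrix.mul_smul, Matrix.smul_mul, hP1Q2 k, smul_zero]
    have hββ' : τ • β' = P₁ * (τ • β) * Q₁ := by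
      rw [hβ', Matrix.mul_smul, Matrix.smul_mul]
    have hexp : NormedSpace.exp (τ • β') = P₁ * NormedSpace.exp (τ • β) * Q₁ := by
      rw [hββ']; exact stmt10_exp (τ • β) P₁ Q₁ hpow
    have h0 := hξ' τ hτ
    rw [hexp, hψ'] at h0
    -- rewrite both sides as dot products
    have lhs : ψ ⬝ᵥ (NormedSpace.exp (τ • β)).mulVec u =
        Q₁ᵀ.mulVec ψ ⬝ᵥ (P₁ * NormedSpace.exp (τ • β) * Q₁).mulVec ξ' := by
      rw [hu, Matrix.mulVec_transpose, Matrix.mulVec_mulVec, Matrix.dotProduct_mulVec,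
        Matrix.dotProduct_mulVec]
      congr 1
      conv_lhs => rw [← hψQ1P1]
      simp only [Matrix.vecMul_vecMul, Matrix.mul_assoc]
    rw [lhs]
    exact h0
  have hP1u : P₁.mulVec u = 0 := hkerP1 u key
  have : P₁.mulVec (Q₁.mulVec ξ') = ξ' := by
    rw [Matrix.mulVec_mulVec, hPQ1, Matrix.one_mulVec]
  rw [hu] at hP1u
  rw [← this, hP1u]
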